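/- If a finite directed graph G on n > 1 vertices is r-robust, then r ≤ ⌈n/2⌉. -/

import Mathlib

open Classical Finset

/-- `reachSet E S r` is X_S^r : the set of nodes in `S` having at least `r`
in-neighbors outside `S` (an edge `(j,i)`, i.e. `E j i`, is a link from `j` to `i`). -/
noncomputable def reachSet {V : Type*} [Fintype V] (E : V → V → Prop)
    (S : Finset V) (r : ℕ) : Finset V :=
  S.filter fun i => r ≤ (Finset.univ.filter fun j => j ∉ S ∧ E j i).card

/-- `(r,s)`-robustness of the digraph with edge relation `E`. -/
def IsRSRobust {V : Type*} [Fintype V] (E : V → V → Prop) (r s : ℕ) : Prop :=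
  ∀ V1 V2 : Finset V, V1.Nonempty → V2.Nonempty → Disjoint V1 V2 →
    reachSet E V1 r = V1 ∨ reachSet E V2 r = V2 ∨
      s ≤ (reachSet E V1 r).card + (reachSet E V2 r).card

theorem robust_le_half {V : Type*} [Fintype V] (E : V → V → Prop) (r : ℕ)
    (hn : 1 < Fintype.card V) (hrob : IsRSRobust E r 1) :
    (r : ℤ) ≤ ⌈(Fintype.card V : ℚ) / 2⌉ := by
  by_contra h
  push_neg at h
  set n := Fintype.card V with hn'
  have hceil : ((n : ℚ) / 2) ≤ (⌈(n : ℚ) / 2⌉ : ℚ) := Int.le_ceil _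
  have h2 : (⌈(n : ℚ) / 2⌉ : ℤ) + 1 ≤ (r : ℤ) := Int.add_one_le_of_lt h
  have hnr : n + 2 ≤ 2 * r := by
    have hq : (n : ℚ) + 2 ≤ 2 * (r : ℚ) := by
      have : ((⌈(n : ℚ) / 2⌉ : ℚ)) + 1 ≤ (r : ℚ) := by exact_mod_cast h2
      linarith
    exact_mod_cast hq
  set k := (n + 1) / 2 with hk
  have hkn : k ≤ n := by omega
  obtain ⟨V1, -, hV1card⟩ := Finset.exists_subset_card_eq (s := (univ : Finset V)) (n := k)
    (by rw [Finset.card_univ]; exact hkn)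
  set V2 := (univ : Finset V) \ V1 with hV2
  have hV2card : V2.card = n - k := by
    rw [hV2, Finset.card_sdiff_of_subset (Finset.subset_univ _), Finset.card_univ, hV1card]
  have hV1ne : V1.Nonempty := Finset.card_pos.mp (by omega)
  have hV2ne : V2.Nonempty := Finset.card_pos.mp (by omega)
  have hdisj : Disjoint V1 V2 := Finset.disjoint_sdiff
  have hR1 : reachSet E V1 r = ∅ := by
    rw [Finset.eq_empty_iff_forall_notMem]
    intro i hi
    rw [reachSet, Finset.mem_filter] at hi
    have hsub : (Finset.univ.filter fun j => j ∉ V1 ∧ E j i) ⊆ V2 := by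
      intro j hj
      rw [Finset.mem_filter] at hj
      simp [hV2, hj.2.1]
    have := Finset.card_le_card hsub
    omega
  have hR2 : reachSet E V2 r = ∅ := by
    rw [Finset.eq_empty_iff_forall_notMem]
    intro i hi
    rw [reachSet, Finset.mem_filter] at hi
    have hsub : (Finset.univ.filter fun j => j ∉ V2 ∧ E j i) ⊆ V1 := by
      intro j hj
      rw [Finset.mem_filter] at hj
      have := hj.2.1
      simp only [hV2, Finset.mem_sdiff, Finset.mem_univ, true_and, not_not] at this
      exact this
    have := Finset.card_le_card hsub
    omega
  rcases hrob V1 V2 hV1ne hV2ne hdisj with h1 | h2 | h3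
  · rw [hR1] at h1; exact hV1ne.ne_empty h1.symm
  · rw [hR2] at h2; exact hV2ne.ne_empty h2.symm
  · rw [hR1, hR2] at h3; simp at h3
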